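/- (Concatenation of solutions.) Let 0 < t < T. If z_1 : [0,t] → X satisfies (S) and (E) on [0,t], z_2 : [t,T] → X satisfies (S) and (E) on [t,T], and z_1(t) = z_2(t), then the concatenated curve z : [0,T] → X, defined by z(s) = z_1(s) for s ∈ [0,t] and z(s) = z_2(s) for s ∈ (t,T], satisfies (S) and (E) on [0,T]. -/

import Mathlib

open Filter Topology Set MeasureTheory
open scoped ENNReal

noncomputable section

/-- Weak convergence of a sequence in a normed space: convergence against every
continuous linear functional. -/
def WeakConv {X : Type*} [NormedAddCommGroup X] [NormedSpace ℝ X]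
    (u : ℕ → X) (z : X) : Prop :=
  ∀ f : X →L[ℝ] ℝ, Tendsto (fun n => f (u n)) atTop (𝓝 (f z))

/-- A set is sequentially weakly compact if every sequence in it has a subsequence
converging weakly to a point of the set. -/
def SeqWeaklyCompact {X : Type*} [NormedAddCommGroup X] [NormedSpace ℝ X]
    (S : Set X) : Prop :=
  ∀ u : ℕ → X, (∀ n, u n ∈ S) →
    ∃ z ∈ S, ∃ φ : ℕ → ℕ, StrictMono φ ∧ WeakConv (fun n => u (φ n)) z

/-- The dissipation of the curve `z` on the interval `[s,t]`, defined as the supremum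
over all finite partitions `s = τ₀ < τ₁ < … < τ_N = t` of `∑ⱼ D (z τⱼ₋₁) (z τⱼ)`. -/
def Diss {X : Type*} (D : X → X → ℝ≥0∞) (z : ℝ → X) (s t : ℝ) : ℝ≥0∞ :=
  ⨆ (N : ℕ) (τ : ℕ → ℝ) (_ : τ 0 = s) (_ : τ N = t)
    (_ : ∀ j < N, τ j < τ (j + 1)),
    ∑ j ∈ Finset.range N, D (z (τ j)) (z (τ (j + 1)))

/-- A curve `z` solves the rate-independent model `(D, I)` on the interval `[a,b]` if the
global stability (S) and the energy inequality (E) hold there; `DI` denotes the partial time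
derivative `∂ₜ I`. -/
def IsSolutionOn {X : Type*} [NormedAddCommGroup X]
    (D : X → X → ℝ≥0∞) (I : ℝ → X → ℝ≥0∞) (DI : ℝ → X → ℝ)
    (z : ℝ → X) (a b : ℝ) : Prop :=
  (∀ s ∈ Icc a b, ∀ w : X, I s (z s) ≤ I s w + D (z s) w) ∧
  (∀ t0 t1 : ℝ, a ≤ t0 → t0 < t1 → t1 ≤ b →
    (I t1 (z t1) : EReal) + (Diss D z t0 t1 : EReal)
      ≤ (I t0 (z t0) : EReal) + ((∫ s in t0..t1, DI s (z s) : ℝ) : EReal))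

structure DPart (s t : ℝ) where
  N : ℕ
  τ : ℕ → ℝ
  h0 : τ 0 = s
  hN : τ N = t
  mono : ∀ j < N, τ j < τ (j + 1)

namespace DPart

variable {s t : ℝ}

lemma tau_le_tau (p : DPart s t) {i j : ℕ} (hij : i ≤ j) (hj : j ≤ p.N) :
    p.τ i ≤ p.τ j := by
  induction j with
  | zero => simp_all
  | succ n ih =>
    rcases Nat.eq_or_lt_of_le hij with h | h
    · exact h ▸ le_rfl
    · exact le_trans (ih (Nat.lt_succ_iff.mp h) (le_trans (Nat.le_succ n) hj))
        (le_of_lt (p.mono n (Nat.lt_of_succ_le hj)))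

lemma tau_mem (p : DPart s t) {j : ℕ} (hj : j ≤ p.N) : p.τ j ∈ Icc s t := by
  constructor
  · exact p.h0.symm.le.trans (p.tau_le_tau (Nat.zero_le j) hj)
  · exact (p.tau_le_tau hj le_rfl).trans p.hN.le

def sum {X : Type*} (D : X → X → ℝ≥0∞) (z : ℝ → X) (p : DPart s t) : ℝ≥0∞ :=
  ∑ j ∈ Finset.range p.N, D (z (p.τ j)) (z (p.τ (j + 1)))

lemma nonempty (h : s ≤ t) : Nonempty (DPart s t) := by
  rcases eq_or_lt_of_le h with rfl | h
  · exact ⟨⟨0, fun _ => s, rfl, rfl, by omega⟩⟩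
  · refine ⟨⟨1, fun j => if j = 0 then s else t, by simp, by simp, ?_⟩⟩
    intro j hj
    interval_cases j
    simpa using h

end DPart

lemma Diss_eq {X : Type*} (D : X → X → ℝ≥0∞) (z : ℝ → X) (s t : ℝ) :
    Diss D z s t = ⨆ p : DPart s t, p.sum D z := by
  apply le_antisymm
  · refine iSup_le fun N => iSup_le fun τ => iSup_le fun h0 => iSup_le fun hN =>
      iSup_le fun hm => ?_
    exact le_iSup (fun p : DPart s t => p.sum D z) ⟨N, τ, h0, hN, hm⟩
  · refine iSup_le fun p => ?_
    exact le_iSup_of_le p.N <| le_iSup_of_le p.τ <| le_iSup_of_le p.h0 <|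
      le_iSup_of_le p.hN <| le_iSup_of_le p.mono le_rfl

lemma Diss_congr {X : Type*} (D : X → X → ℝ≥0∞) {z z' : ℝ → X} {s t : ℝ}
    (h : ∀ u ∈ Icc s t, z u = z' u) : Diss D z s t = Diss D z' s t := by
  rw [Diss_eq, Diss_eq]
  refine iSup_congr fun p => Finset.sum_congr rfl fun j hj => ?_
  rw [Finset.mem_range] at hj
  rw [h _ (p.tau_mem hj.le), h _ (p.tau_mem hj)]

lemma Diss_extend {X : Type*} (D : X → X → ℝ≥0∞) (z : ℝ → X) {t0 r s : ℝ}
    (h0 : t0 ≤ r) (hrs : r < s) :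
    Diss D z t0 r + D (z r) (z s) ≤ Diss D z t0 s := by
  haveI := DPart.nonempty h0
  rw [Diss_eq, Diss_eq, ENNReal.iSup_add]
  refine iSup_le fun p => ?_
  have hp' : (⟨p.N + 1, fun j => if j ≤ p.N then p.τ j else s, by simp [p.h0],
      by simp, ?_⟩ : DPart t0 s).sum D z = p.sum D z + D (z r) (z s) := ?_
  · rw [← hp']
    exact le_iSup (fun q : DPart t0 s => q.sum D z) _
  · intro j hj
    rcases Nat.lt_or_ge j p.N with h | h
    · simpa [Nat.le_of_lt h, Nat.succ_le_of_lt h] using p.mono j h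
    · have hj' : j = p.N := by omega
      subst hj'
      simp [p.hN, hrs]
  · simp only [DPart.sum, Finset.sum_range_succ]
    congr 1
    · refine Finset.sum_congr rfl fun j hj => ?_
      rw [Finset.mem_range] at hj
      simp [hj.le, Nat.succ_le_of_lt hj]
    · simp [p.hN]

lemma Diss_subadd {X : Type*} (D : X → X → ℝ≥0∞)
    (hDtri : ∀ a b c : X, D a c ≤ D a b + D b c) (z : ℝ → X) {t0 tm t1 : ℝ}
    (h0m : t0 < tm) (hm1 : tm < t1) :
    Diss D z t0 t1 ≤ Diss D z t0 tm + Diss D z tm t1 := by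
  classical
  rw [Diss_eq]
  refine iSup_le fun p => ?_
  obtain ⟨N, τ, h0, hN, hmono⟩ := p
  simp only [DPart.sum]
  have htau : ∀ i j : ℕ, i ≤ j → j ≤ N → τ i ≤ τ j := fun i j hij hj =>
    DPart.tau_le_tau ⟨N, τ, h0, hN, hmono⟩ hij hj
  have hPN : tm ≤ τ N := hN ▸ hm1.le
  have hex : ∃ j, tm ≤ τ j := ⟨N, hPN⟩
  set k := Nat.find hex with hk
  have hkN : k ≤ N := Nat.find_le hPN
  have hktm : tm ≤ τ k := Nat.find_spec hex
  have hkpos : 0 < k := by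
    rcases Nat.eq_zero_or_pos k with h | h
    · exfalso; rw [h, h0] at hktm; linarith
    · exact h
  have hkm1 : τ (k - 1) < tm := by
    have := Nat.find_min hex (show k - 1 < k by omega)
    linarith [not_le.mp this]
  have hle1 : ∀ q : DPart t0 tm, q.sum D z ≤ Diss D z t0 tm := fun q => by
    rw [Diss_eq]; exact le_iSup (fun q : DPart t0 tm => q.sum D z) q
  have hle2 : ∀ q : DPart tm t1, q.sum D z ≤ Diss D z tm t1 := fun q => by
    rw [Diss_eq]; exact le_iSup (fun q : DPart tm t1 => q.sum D z) q
  rcases eq_or_lt_of_le hktm with heq | hlt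
  · -- τ k = tm
    have A : ∑ j ∈ Finset.range k, D (z (τ j)) (z (τ (j + 1))) ≤ Diss D z t0 tm := by
      have := hle1 ⟨k, τ, h0, heq.symm, fun j hj => hmono j (lt_of_lt_of_le hj hkN)⟩
      simpa [DPart.sum] using this
    have B : ∑ j ∈ Finset.range (N - k), D (z (τ (k + j))) (z (τ (k + j + 1)))
        ≤ Diss D z tm t1 := by
      have := hle2 ⟨N - k, fun j => τ (k + j), by simpa using heq.symm,
        (by show τ (k + (N - k)) = t1
            rw [Nat.add_sub_cancel' hkN]; exact hN),
        fun j hj => by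
          have := hmono (k + j) (by omega)
          simpa [Nat.add_assoc] using this⟩
      simp only [DPart.sum] at this
      refine le_trans (le_of_eq ?_) this
      exact Finset.sum_congr rfl fun j _ => by rw [Nat.add_assoc]
    calc ∑ j ∈ Finset.range N, D (z (τ j)) (z (τ (j + 1)))
        = ∑ j ∈ Finset.range k, D (z (τ j)) (z (τ (j + 1)))
          + ∑ j ∈ Finset.range (N - k), D (z (τ (k + j))) (z (τ (k + j + 1))) := by
          rw [show N = k + (N - k) by omega,
            Finset.sum_range_add (fun j => D (z (τ j)) (z (τ (j + 1)))) k (N - k)]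
          simp [Nat.add_assoc]
      _ ≤ Diss D z t0 tm + Diss D z tm t1 := add_le_add A B
  · -- tm < τ k
    obtain ⟨m, hm⟩ : ∃ m, k = m + 1 := ⟨k - 1, by omega⟩
    rw [hm] at hlt hktm hkN
    have hkm1' : τ m < tm := by
      have hmm : m = k - 1 := by omega
      rw [hmm]; exact hkm1
    have A : ∑ j ∈ Finset.range m, D (z (τ j)) (z (τ (j + 1)))
        + D (z (τ m)) (z tm) ≤ Diss D z t0 tm := by
      have := hle1 ⟨m + 1, fun j => if j = m + 1 then tm else τ j,
        (by show (if 0 = m + 1 then tm else τ 0) = t0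
            rw [if_neg (by omega : ¬ (0 = m + 1))]; exact h0),
        (by show (if m + 1 = m + 1 then tm else τ (m + 1)) = tm
            rw [if_pos rfl]),
        (by intro j hj
            show (if j = m + 1 then tm else τ j) < (if j + 1 = m + 1 then tm else τ (j + 1))
            rcases Nat.eq_or_lt_of_le (Nat.succ_le_of_lt hj) with h | h
            · rw [if_neg (by omega : ¬ (j = m + 1)), if_pos h]
              calc τ j ≤ τ m := htau j m (by omega) (by omega)
                _ < tm := hkm1'
            · rw [if_neg (by omega : ¬ (j = m + 1)), if_neg (by omega : ¬ (j + 1 = m + 1))]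
              exact hmono j (by omega))⟩
      simp only [DPart.sum] at this
      refine le_trans (le_of_eq ?_) this
      rw [Finset.sum_range_succ]
      congr 1
      · refine Finset.sum_congr rfl fun j hj => ?_
        rw [Finset.mem_range] at hj
        rw [if_neg (by omega : ¬ (j = m + 1)), if_neg (by omega : ¬ (j + 1 = m + 1))]
      · rw [if_neg (by omega : ¬ (m = m + 1)), if_pos rfl]
    have B : D (z tm) (z (τ (m + 1)))
        + ∑ j ∈ Finset.range (N - (m + 1)), D (z (τ (m + 1 + j))) (z (τ (m + 1 + j + 1)))
        ≤ Diss D z tm t1 := by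
      have := hle2 ⟨N - m, fun j => if j = 0 then tm else τ (m + j),
        (by show (if 0 = 0 then tm else τ (m + 0)) = tm
            rw [if_pos rfl]),
        (by show (if N - m = 0 then tm else τ (m + (N - m))) = t1
            rw [if_neg (by omega : ¬ (N - m = 0)), show m + (N - m) = N by omega]
            exact hN),
        (by intro j hj
            show (if j = 0 then tm else τ (m + j)) < (if j + 1 = 0 then tm else τ (m + (j + 1)))
            rcases Nat.eq_zero_or_pos j with rfl | hjpos
            · rw [if_pos rfl, if_neg (by omega : ¬ (0 + 1 = 0)),
                show m + (0 + 1) = m + 1 by omega]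
              exact hlt
            · rw [if_neg (by omega : ¬ (j = 0)), if_neg (by omega : ¬ (j + 1 = 0))]
              have := hmono (m + j) (by omega)
              rw [show m + j + 1 = m + (j + 1) by omega] at this
              exact this)⟩
      simp only [DPart.sum] at this
      refine le_trans (le_of_eq ?_) this
      rw [show N - m = (N - (m + 1)) + 1 by omega, Finset.sum_range_succ']
      rw [add_comm]
      congr 1
      refine Finset.sum_congr rfl fun j hj => ?_
      rw [if_neg (by omega : ¬ (j + 1 = 0)), if_neg (by omega : ¬ (j + 1 + 1 = 0)),
        show m + (j + 1) = m + 1 + j by omega, show m + (j + 1 + 1) = m + 1 + j + 1 by omega]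
    have e1 : ∑ j ∈ Finset.range N, D (z (τ j)) (z (τ (j + 1)))
        = ∑ j ∈ Finset.range m, D (z (τ j)) (z (τ (j + 1)))
          + ∑ j ∈ Finset.range (N - m), D (z (τ (m + j))) (z (τ (m + j + 1))) := by
      have := Finset.sum_range_add (fun j => D (z (τ j)) (z (τ (j + 1)))) m (N - m)
      rw [show m + (N - m) = N by omega] at this
      exact this
    have e2 : ∑ j ∈ Finset.range (N - m), D (z (τ (m + j))) (z (τ (m + j + 1)))
        = D (z (τ m)) (z (τ (m + 1)))
          + ∑ j ∈ Finset.range (N - (m + 1)), D (z (τ (m + 1 + j))) (z (τ (m + 1 + j + 1))) := by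
      rw [show N - m = (N - (m + 1)) + 1 by omega, Finset.sum_range_succ', add_comm]
      congr 1
      exact Finset.sum_congr rfl fun j hj => by
        rw [show m + (j + 1) = m + 1 + j by omega, show m + 1 + j + 1 = m + (j + 1) + 1 by omega]
    rw [e1, e2]
    calc ∑ j ∈ Finset.range m, D (z (τ j)) (z (τ (j + 1)))
          + (D (z (τ m)) (z (τ (m + 1)))
            + ∑ j ∈ Finset.range (N - (m + 1)), D (z (τ (m + 1 + j))) (z (τ (m + 1 + j + 1))))
        ≤ ∑ j ∈ Finset.range m, D (z (τ j)) (z (τ (j + 1)))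
          + ((D (z (τ m)) (z tm) + D (z tm) (z (τ (m + 1))))
            + ∑ j ∈ Finset.range (N - (m + 1)), D (z (τ (m + 1 + j))) (z (τ (m + 1 + j + 1)))) := by
          gcongr
          exact hDtri _ _ _
      _ = (∑ j ∈ Finset.range m, D (z (τ j)) (z (τ (j + 1))) + D (z (τ m)) (z tm))
          + (D (z tm) (z (τ (m + 1)))
            + ∑ j ∈ Finset.range (N - (m + 1)), D (z (τ (m + 1 + j))) (z (τ (m + 1 + j + 1)))) := by
          ring
      _ ≤ Diss D z t0 tm + Diss D z tm t1 := add_le_add A B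

lemma measurable_comp_countable_range {α γ : Type*} [MeasurableSpace α] [MeasurableSpace γ]
    {g : α → ℝ} (hg : Measurable g) (hc : (Set.range g).Countable) (f : ℝ → γ) :
    Measurable (fun s => f (g s)) := by
  intro B hB
  have hpre : (fun s => f (g s)) ⁻¹' B = ⋃ q ∈ Set.range g ∩ f ⁻¹' B, g ⁻¹' {q} := by
    ext s
    simp only [mem_preimage, mem_iUnion, mem_inter_iff, mem_range, mem_singleton_iff]
    constructor
    · intro h; exact ⟨g s, ⟨⟨s, rfl⟩, h⟩, rfl⟩
    · rintro ⟨q, ⟨_, hq⟩, rfl⟩; exact hq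
  rw [hpre]
  exact MeasurableSet.biUnion (hc.mono inter_subset_left)
    fun q _ => hg (measurableSet_singleton q)

lemma meas_comp_countable {α : Type*} [MeasurableSpace α] {g : α → ℝ} (hg : Measurable g)
    (hc : (Set.range g).Countable) {H : ℝ → α → ℝ}
    (hH : ∀ q ∈ Set.range g, Measurable (H q)) :
    Measurable (fun s => H (g s) s) := by
  intro B hB
  have hpre : (fun s => H (g s) s) ⁻¹' B = ⋃ q ∈ Set.range g, (g ⁻¹' {q} ∩ H q ⁻¹' B) := by
    ext s
    simp only [mem_preimage, mem_iUnion, mem_inter_iff, mem_range, mem_singleton_iff]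
    constructor
    · intro h; exact ⟨g s, ⟨s, rfl⟩, rfl, h⟩
    · rintro ⟨q, _, rfl, hq⟩; exact hq
  rw [hpre]
  exact MeasurableSet.biUnion hc
    fun q hq => (hg (measurableSet_singleton q)).inter (hH q hq hB)

lemma lsc_measurable {X : Type*} [NormedAddCommGroup X] [MeasurableSpace X] [BorelSpace X]
    {F : X → ℝ≥0∞}
    (h : ∀ (u : ℕ → X) (w : X), Tendsto u atTop (𝓝 w) → F w ≤ liminf (fun j => F (u j)) atTop) :
    Measurable F := by
  apply measurable_of_Iic
  intro c
  have hclosed : IsClosed (F ⁻¹' Iic c) := by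
    apply IsSeqClosed.isClosed
    intro u w hu hw
    have h1 : F w ≤ liminf (fun j => F (u j)) atTop := h u w hw
    have h2 : liminf (fun j => F (u j)) atTop ≤ c := by
      refine le_trans (liminf_le_liminf (Filter.Eventually.of_forall fun j => hu j)) ?_
      simp
    exact le_trans h1 h2
  exact hclosed.measurableSet

lemma grid_lemma (a : ℝ) (n : ℕ) :
    Measurable (fun s : ℝ => max a (((⌊s * (n+1)⌋ : ℤ) : ℝ) / (n+1)))
    ∧ (Set.range (fun s : ℝ => max a (((⌊s * (n+1)⌋ : ℤ) : ℝ) / (n+1)))).Countable := by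
  have hmono : Monotone (fun s : ℝ => ((⌊s * (n+1)⌋ : ℤ) : ℝ) / (n+1)) := by
    intro x y hxy
    have h1 : (⌊x * (n+1)⌋ : ℝ) ≤ (⌊y * (n+1)⌋ : ℤ) := by
      exact_mod_cast Int.floor_le_floor
        (mul_le_mul_of_nonneg_right hxy (by positivity))
    have := mul_le_mul_of_nonneg_right h1
      (inv_nonneg.mpr (by positivity : (0:ℝ) ≤ (n:ℝ)+1))
    simpa [div_eq_mul_inv] using this
  constructor
  · exact measurable_const.max hmono.measurable
  · refine Set.Countable.mono ?_ (Set.countable_range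
      (fun k : ℤ => max a ((k : ℝ) / (n+1))))
    rintro x ⟨s, rfl⟩
    exact ⟨⌊s * (n+1)⌋, rfl⟩

lemma curve_aesm {X : Type*} [NormedAddCommGroup X] [MeasurableSpace X] [BorelSpace X]
    {v : ℝ → ℝ} (hv : Monotone v) {z : ℝ → X} {a b K : ℝ}
    (hbound : ∀ r s : ℝ, a ≤ r → r ≤ s → s ≤ b → ‖z s - z r‖ ≤ K * (v s - v r)) :
    AEStronglyMeasurable z (volume.restrict (Ioc a b)) := by
  set g : ℕ → ℝ → ℝ := fun n s => max a (((⌊s * (n+1)⌋ : ℤ) : ℝ) / (n+1)) with hg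
  have hga : ∀ n s, a ≤ g n s := fun n s => le_max_left _ _
  have hgs : ∀ n (s : ℝ), a ≤ s → g n s ≤ s := by
    intro n s hs
    refine max_le hs ?_
    rw [div_le_iff₀ (by positivity : (0:ℝ) < (n:ℝ)+1)]
    exact Int.floor_le _
  have hlow : ∀ (n : ℕ) (s : ℝ), s - 1/((n:ℝ)+1) ≤ g n s := by
    intro n s
    refine le_trans ?_ (le_max_right _ _)
    rw [sub_le_iff_le_add, ← add_div, le_div_iff₀ (by positivity : (0:ℝ) < (n:ℝ)+1)]
    linarith [Int.lt_floor_add_one (s * ((n:ℝ)+1))]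
  have htend : ∀ s : ℝ, a ≤ s → Tendsto (fun n => g n s) atTop (𝓝 s) := by
    intro s hs
    refine tendsto_of_tendsto_of_tendsto_of_le_of_le (g := fun n : ℕ => s - 1/((n:ℝ)+1))
      (h := fun _ : ℕ => s) ?_ tendsto_const_nhds (fun n => hlow n s) (fun n => hgs n s hs)
    have := Tendsto.sub (tendsto_const_nhds : Tendsto (fun _ : ℕ => s) atTop (𝓝 s))
      tendsto_one_div_add_atTop_nhds_zero_nat
    simpa using this
  have hstep : ∀ n : ℕ, StronglyMeasurable (fun s => z (g n s)) := by
    intro n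
    obtain ⟨hmeas, hcnt⟩ := grid_lemma a n
    rw [stronglyMeasurable_iff_measurable_separable]
    constructor
    · exact measurable_comp_countable_range hmeas hcnt z
    · refine TopologicalSpace.IsSeparable.mono ((hcnt.image z).isSeparable) ?_
      rintro x ⟨s, rfl⟩
      exact ⟨g n s, ⟨s, rfl⟩, rfl⟩
  have hcontae : ∀ᵐ x ∂(volume.restrict (Ioc a b)), ContinuousAt v x := by
    refine ae_restrict_of_ae ?_
    rw [ae_iff]
    exact hv.countable_not_continuousAt.measure_zero _
  have hmem : ∀ᵐ x ∂(volume.restrict (Ioc a b)), x ∈ Ioc a b :=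
    ae_restrict_mem measurableSet_Ioc
  refine aestronglyMeasurable_of_tendsto_ae atTop (fun n => (hstep n).aestronglyMeasurable) ?_
  filter_upwards [hmem, hcontae] with x hx hcx
  rw [tendsto_iff_norm_sub_tendsto_zero]
  have hvb : Tendsto (fun n => v (g n x)) atTop (𝓝 (v x)) :=
    hcx.tendsto.comp (htend x hx.1.le)
  have hrhs : Tendsto (fun n => K * (v x - v (g n x))) atTop (𝓝 0) := by
    have h0 := ((tendsto_const_nhds : Tendsto (fun _ : ℕ => v x) atTop (𝓝 (v x))).sub
      hvb).const_mul K
    simpa using h0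
  refine squeeze_zero (fun n => norm_nonneg _) (fun n => ?_) hrhs
  rw [norm_sub_rev]
  exact hbound (g n x) x (hga n x) (hgs n x hx.1.le) hx.2

lemma DI_intervalIntegrable {X : Type*} [NormedAddCommGroup X] [MeasurableSpace X] [BorelSpace X]
    {T CI : ℝ} (hT : 0 < T) (hCI : 0 ≤ CI)
    {I : ℝ → X → ℝ≥0∞} {DI : ℝ → X → ℝ}
    (hImeas : ∀ q ∈ Icc (0:ℝ) T, Measurable (I q))
    (hIsmooth : ∀ w : X, (∃ s ∈ Icc (0:ℝ) T, I s w ≠ ⊤) →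
      ∀ s ∈ Icc (0:ℝ) T, I s w ≠ ⊤ ∧
        HasDerivWithinAt (fun τ => (I τ w).toReal) (DI s w) (Icc (0:ℝ) T) s ∧ |DI s w| ≤ CI)
    {z : ℝ → X} {a b : ℝ} (h0a : 0 ≤ a) (hab : a < b) (hbT : b ≤ T)
    (hzm : AEStronglyMeasurable z (volume.restrict (Ioc a b)))
    (hfin : ∀ s ∈ Ioc a b, I s (z s) ≠ ⊤) :
    IntervalIntegrable (fun s => DI s (z s)) MeasureTheory.volume a b := by
  set μ := volume.restrict (Ioc a b) with hμ
  have hIccsub : Ioc a b ⊆ Icc (0:ℝ) T := fun s hs => ⟨h0a.trans hs.1.le, hs.2.trans hbT⟩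
  set zt := hzm.mk z with hzt
  have hztm : StronglyMeasurable zt := hzm.stronglyMeasurable_mk
  have hzae : z =ᵐ[μ] zt := hzm.ae_eq_mk
  set F : ℝ → X → ℝ := fun q w => (I q w).toReal with hF
  -- grids
  set G : ℕ → ℝ → ℝ := fun n x =>
    max 0 (min T (((⌊x * (((n:ℝ)+1)^2)⌋ : ℤ) : ℝ) / (((n:ℝ)+1)^2))) with hG
  have hGmono : ∀ n : ℕ, Monotone (G n) := by
    intro n x y hxy
    have h1 : ((⌊x * (((n:ℝ)+1)^2)⌋ : ℤ) : ℝ) ≤ ((⌊y * (((n:ℝ)+1)^2)⌋ : ℤ) : ℝ) := by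
      exact_mod_cast Int.floor_le_floor (mul_le_mul_of_nonneg_right hxy (by positivity))
    have h2 := mul_le_mul_of_nonneg_right h1
      (inv_nonneg.mpr (by positivity : (0:ℝ) ≤ ((n:ℝ)+1)^2))
    exact max_le_max le_rfl (min_le_min le_rfl (by simpa [div_eq_mul_inv] using h2))
  have hGmeas : ∀ n : ℕ, Measurable (G n) := fun n => (hGmono n).measurable
  have hGcnt : ∀ n : ℕ, (Set.range (G n)).Countable := by
    intro n
    refine Set.Countable.mono ?_ (Set.countable_range
      (fun k : ℤ => max 0 (min T ((k : ℝ) / (((n:ℝ)+1)^2)))))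
    rintro x ⟨s, rfl⟩
    exact ⟨⌊s * (((n:ℝ)+1)^2)⌋, rfl⟩
  have hGIcc : ∀ (n : ℕ) (x : ℝ), G n x ∈ Icc (0:ℝ) T := by
    intro n x
    exact ⟨le_max_left _ _, max_le hT.le (min_le_left _ _)⟩
  have hGapprox : ∀ (n : ℕ) (x : ℝ), x ∈ Icc (0:ℝ) T → |G n x - x| ≤ 1/(((n:ℝ)+1)^2) := by
    intro n x hx
    have hm : (0:ℝ) < ((n:ℝ)+1)^2 := by positivity
    set d : ℝ := ((⌊x * (((n:ℝ)+1)^2)⌋ : ℤ) : ℝ) / (((n:ℝ)+1)^2) with hd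
    have hdx : d ≤ x := by
      rw [hd, div_le_iff₀ hm]
      exact Int.floor_le _
    have hdlow : x - 1/(((n:ℝ)+1)^2) ≤ d := by
      rw [hd, sub_le_iff_le_add, ← add_div, le_div_iff₀ hm]
      linarith [Int.lt_floor_add_one (x * (((n:ℝ)+1)^2))]
    have hmin : min T d = d := min_eq_right (hdx.trans hx.2)
    have hup : G n x ≤ x := by
      rw [hG]; dsimp only; rw [hmin]
      exact max_le hx.1 hdx
    have hlo : x - 1/(((n:ℝ)+1)^2) ≤ G n x := by
      rw [hG]; dsimp only; rw [hmin]
      exact hdlow.trans (le_max_right _ _)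
    rw [abs_le]
    constructor <;> linarith
  -- approximating functions
  set φ : ℕ → ℝ → ℝ := fun n s =>
    ((n:ℝ)+1) * (F (G n (s + 1/((n:ℝ)+1))) (zt s) - F (G n s) (zt s)) with hφ
  have hbase : ∀ q ∈ Icc (0:ℝ) T, Measurable (fun s : ℝ => F q (zt s)) := by
    intro q hq
    exact ENNReal.measurable_toReal.comp ((hImeas q hq).comp hztm.measurable)
  have hφmeas : ∀ n : ℕ, Measurable (φ n) := by
    intro n
    have inner : Measurable (fun s : ℝ => F (G n s) (zt s)) := by
      refine meas_comp_countable (H := fun q s => F q (zt s)) (hGmeas n) (hGcnt n) ?_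
      rintro q ⟨x, rfl⟩
      exact hbase _ (hGIcc n x)
    have outer : Measurable (fun s : ℝ => F (G n (s + 1/((n:ℝ)+1))) (zt s)) := by
      refine meas_comp_countable (H := fun q s => F q (zt s))
        (g := fun s => G n (s + 1/((n:ℝ)+1))) ((hGmeas n).comp (measurable_id.add_const _)) ?_ ?_
      · refine Set.Countable.mono ?_ (hGcnt n)
        rintro x ⟨s, rfl⟩
        exact ⟨s + 1/((n:ℝ)+1), rfl⟩
      · rintro q ⟨x, rfl⟩
        exact hbase _ (hGIcc n _)
    exact (outer.sub inner).const_mul _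
  have hmem : ∀ᵐ s ∂μ, s ∈ Ioc a b := ae_restrict_mem measurableSet_Ioc
  have hbnd : ∀ᵐ s ∂μ, ‖DI s (z s)‖ ≤ CI := by
    filter_upwards [hmem] with s hs
    have hsm := hIsmooth (z s) ⟨s, hIccsub hs, hfin s hs⟩ s (hIccsub hs)
    rw [Real.norm_eq_abs]
    exact hsm.2.2
  have hsneT : ∀ᵐ s ∂μ, s ≠ T := by
    refine ae_restrict_of_ae ?_
    rw [ae_iff]
    simpa using measure_singleton T
  have hlim : ∀ᵐ s ∂μ, Tendsto (fun n => φ n s) atTop (𝓝 (DI s (z s))) := by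
    filter_upwards [hmem, hzae, hsneT] with s hs hzs hsT
    have hsIcc : s ∈ Icc (0:ℝ) T := hIccsub hs
    have hsT' : s < T := lt_of_le_of_ne hsIcc.2 hsT
    have hWfin : ∃ s' ∈ Icc (0:ℝ) T, I s' (z s) ≠ ⊤ := ⟨s, hsIcc, hfin s hs⟩
    have hder := (hIsmooth (z s) hWfin s hsIcc).2.1
    have hLip : ∀ p ∈ Icc (0:ℝ) T, ∀ q ∈ Icc (0:ℝ) T,
        |F p (z s) - F q (z s)| ≤ CI * |p - q| := by
      intro p hp q hq
      have := Convex.norm_image_sub_le_of_norm_hasDerivWithin_le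
        (f := fun τ => F τ (z s)) (f' := fun τ => DI τ (z s)) (C := CI)
        (fun x hx => (hIsmooth (z s) hWfin x hx).2.1)
        (fun x hx => by rw [Real.norm_eq_abs]; exact (hIsmooth (z s) hWfin x hx).2.2)
        (convex_Icc 0 T) hq hp
      simpa [Real.norm_eq_abs] using this
    have hev : ∀ᶠ n : ℕ in atTop, 1/((n:ℝ)+1) < T - s :=
      tendsto_one_div_add_atTop_nhds_zero_nat.eventually_lt_const (by linarith)
    have hseq : Tendsto (fun n : ℕ => s + 1/((n:ℝ)+1)) atTop (𝓝[Icc (0:ℝ) T \ {s}] s) := by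
      rw [tendsto_nhdsWithin_iff]
      constructor
      · have := Tendsto.add (tendsto_const_nhds : Tendsto (fun _ : ℕ => s) atTop (𝓝 s))
          tendsto_one_div_add_atTop_nhds_zero_nat
        simpa using this
      · filter_upwards [hev] with n hn
        have hpos : (0:ℝ) < 1/((n:ℝ)+1) := by positivity
        refine ⟨⟨by linarith [hsIcc.1], by linarith⟩, ?_⟩
        simp only [mem_singleton_iff]
        intro h
        linarith
    have hslope : Tendsto (fun n : ℕ => slope (fun τ => F τ (z s)) s (s + 1/((n:ℝ)+1)))
        atTop (𝓝 (DI s (z s))) :=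
      (hasDerivWithinAt_iff_tendsto_slope.mp hder).comp hseq
    have hψeq : ∀ n : ℕ, slope (fun τ => F τ (z s)) s (s + 1/((n:ℝ)+1))
        = ((n:ℝ)+1) * (F (s + 1/((n:ℝ)+1)) (z s) - F s (z s)) := by
      intro n
      rw [slope_def_field, add_sub_cancel_left]
      have hn1 : ((n:ℝ)+1) ≠ 0 := by positivity
      field_simp
    have hψt : Tendsto (fun n : ℕ => ((n:ℝ)+1) * (F (s + 1/((n:ℝ)+1)) (z s) - F s (z s)))
        atTop (𝓝 (DI s (z s))) := by
      refine hslope.congr fun n => hψeq n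
    have hdiff : ∀ᶠ n : ℕ in atTop,
        ‖φ n s - ((n:ℝ)+1) * (F (s + 1/((n:ℝ)+1)) (z s) - F s (z s))‖ ≤ 2*CI/((n:ℝ)+1) := by
      filter_upwards [hev] with n hn
      have hn1 : (0:ℝ) < (n:ℝ)+1 := by positivity
      have hpos1 : (0:ℝ) < 1/((n:ℝ)+1) := by positivity
      have hshIcc : s + 1/((n:ℝ)+1) ∈ Icc (0:ℝ) T :=
        ⟨by linarith [hsIcc.1], by linarith⟩
      have hA : |F (G n (s + 1/((n:ℝ)+1))) (z s) - F (s + 1/((n:ℝ)+1)) (z s)|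
          ≤ CI * (1/(((n:ℝ)+1)^2)) := by
        refine (hLip _ (hGIcc n _) _ hshIcc).trans ?_
        exact mul_le_mul_of_nonneg_left (hGapprox n _ hshIcc) hCI
      have hB : |F (G n s) (z s) - F s (z s)| ≤ CI * (1/(((n:ℝ)+1)^2)) := by
        refine (hLip _ (hGIcc n _) _ hsIcc).trans ?_
        exact mul_le_mul_of_nonneg_left (hGapprox n _ hsIcc) hCI
      have heq : φ n s - ((n:ℝ)+1) * (F (s + 1/((n:ℝ)+1)) (z s) - F s (z s))
          = ((n:ℝ)+1) * ((F (G n (s + 1/((n:ℝ)+1))) (z s) - F (s + 1/((n:ℝ)+1)) (z s))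
            - (F (G n s) (z s) - F s (z s))) := by
        rw [hφ]; dsimp only
        rw [← hzs]
        ring
      rw [Real.norm_eq_abs, heq, abs_mul, abs_of_nonneg hn1.le]
      have habs : |(F (G n (s + 1/((n:ℝ)+1))) (z s) - F (s + 1/((n:ℝ)+1)) (z s))
          - (F (G n s) (z s) - F s (z s))|
          ≤ CI * (1/(((n:ℝ)+1)^2)) + CI * (1/(((n:ℝ)+1)^2)) :=
        (abs_sub _ _).trans (add_le_add hA hB)
      calc ((n:ℝ)+1) * |(F (G n (s + 1/((n:ℝ)+1))) (z s) - F (s + 1/((n:ℝ)+1)) (z s))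
            - (F (G n s) (z s) - F s (z s))|
          ≤ ((n:ℝ)+1) * (CI * (1/(((n:ℝ)+1)^2)) + CI * (1/(((n:ℝ)+1)^2))) :=
            mul_le_mul_of_nonneg_left habs hn1.le
        _ = 2*CI/((n:ℝ)+1) := by field_simp; ring
    have hzero : Tendsto (fun n : ℕ => φ n s
        - ((n:ℝ)+1) * (F (s + 1/((n:ℝ)+1)) (z s) - F s (z s))) atTop (𝓝 0) := by
      refine squeeze_zero_norm' hdiff ?_
      have := tendsto_one_div_add_atTop_nhds_zero_nat.const_mul (2*CI)
      simpa [div_eq_mul_inv, mul_comm, mul_assoc] using this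
    have := hzero.add hψt
    simpa using this
  have hDIm : AEMeasurable (fun s => DI s (z s)) μ :=
    aemeasurable_of_tendsto_metrizable_ae atTop (fun n => (hφmeas n).aemeasurable) hlim
  have hint : Integrable (fun s => DI s (z s)) μ :=
    Integrable.mono' (integrable_const CI) hDIm.aestronglyMeasurable hbnd
  rw [intervalIntegrable_iff_integrableOn_Ioc_of_le hab.le]
  exact hint

/-- Concatenation of solutions: if `z1` solves (S) & (E) on `[0,t]`, `z2` solves (S) & (E)
on `[t,T]` and `z1 t = z2 t`, then the concatenated curve solves (S) & (E) on `[0,T]`. -/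
theorem concatenation_of_solutions
    {X : Type*} [NormedAddCommGroup X] [NormedSpace ℝ X] [CompleteSpace X]
    (T cD CI : ℝ) (hT : 0 < T) (hcD : 0 < cD) (hCI : 0 < CI)
    -- `D` is a dissipation distance:
    (D : X → X → ℝ≥0∞)
    (hD0 : ∀ z : X, D z z = 0)
    (hDtri : ∀ z1 z2 z3 : X, D z1 z3 ≤ D z1 z2 + D z2 z3)
    (hDcoer : ∀ z0 z1 : X, ENNReal.ofReal (cD * ‖z1 - z0‖) ≤ D z0 z1)
    (hDlsc : ∀ (u v : ℕ → X) (z w : X), WeakConv u z → WeakConv v w →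
      D z w ≤ liminf (fun j => D (u j) (v j)) atTop)
    -- `I` is an energy-storage functional with partial time derivative `DI`:
    (I : ℝ → X → ℝ≥0∞) (DI : ℝ → X → ℝ)
    (hIlsc : ∀ s ∈ Icc (0:ℝ) T, ∀ (u : ℕ → X) (z : X), WeakConv u z →
      I s z ≤ liminf (fun j => I s (u j)) atTop)
    (hIsmooth : ∀ z : X, (∃ s ∈ Icc (0:ℝ) T, I s z ≠ ⊤) →
      ∀ s ∈ Icc (0:ℝ) T, I s z ≠ ⊤ ∧
        HasDerivWithinAt (fun τ => (I τ z).toReal) (DI s z) (Icc (0:ℝ) T) s ∧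
        |DI s z| ≤ CI)
    (tm : ℝ) (htm0 : 0 < tm) (htmT : tm < T)
    (z1 z2 : ℝ → X)
    (h1 : IsSolutionOn D I DI z1 0 tm)
    (h2 : IsSolutionOn D I DI z2 tm T)
    (hmatch : z1 tm = z2 tm)
    (z : ℝ → X)
    (hzle : ∀ s : ℝ, 0 ≤ s → s ≤ tm → z s = z1 s)
    (hzgt : ∀ s : ℝ, tm < s → s ≤ T → z s = z2 s) :
    IsSolutionOn D I DI z 0 T := by
  letI : MeasurableSpace X := borel X
  haveI : BorelSpace X := ⟨rfl⟩
  obtain ⟨hS1, hE1⟩ := h1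
  obtain ⟨hS2, hE2⟩ := h2
  have hz1 : ∀ s ∈ Icc (0:ℝ) tm, z s = z1 s := fun s hs => hzle s hs.1 hs.2
  have hz2 : ∀ s ∈ Icc tm T, z s = z2 s := by
    intro s hs
    rcases eq_or_lt_of_le hs.1 with heq | h
    · rw [← heq, hzle tm htm0.le le_rfl, hmatch]
    · exact hzgt s h hs.2
  constructor
  · -- stability
    intro s hs w
    rcases le_or_gt s tm with h | h
    · rw [hz1 s ⟨hs.1, h⟩]; exact hS1 s ⟨hs.1, h⟩ w
    · rw [hz2 s ⟨h.le, hs.2⟩]; exact hS2 s ⟨h.le, hs.2⟩ w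
  · -- energy inequality
    intro t0 t1 ht0 h01 ht1
    rcases le_or_gt t1 tm with hcase | hcase
    · -- [t0,t1] ⊆ [0,tm]
      have hmem : ∀ u ∈ Icc t0 t1, z u = z1 u :=
        fun u hu => hz1 u ⟨ht0.trans hu.1, hu.2.trans hcase⟩
      have hDisseq : Diss D z t0 t1 = Diss D z1 t0 t1 := Diss_congr D hmem
      have hInt : (∫ s in t0..t1, DI s (z s)) = ∫ s in t0..t1, DI s (z1 s) := by
        refine intervalIntegral.integral_congr fun u hu => ?_
        rw [uIcc_of_le h01.le] at hu
        rw [hmem u hu]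
      rw [hmem t0 ⟨le_rfl, h01.le⟩, hmem t1 ⟨h01.le, le_rfl⟩, hDisseq, hInt]
      exact hE1 t0 t1 ht0 h01 hcase
    rcases le_or_gt tm t0 with hcase2 | hcase2
    · -- [t0,t1] ⊆ [tm,T]
      have hmem : ∀ u ∈ Icc t0 t1, z u = z2 u :=
        fun u hu => hz2 u ⟨hcase2.trans hu.1, hu.2.trans ht1⟩
      have hDisseq : Diss D z t0 t1 = Diss D z2 t0 t1 := Diss_congr D hmem
      have hInt : (∫ s in t0..t1, DI s (z s)) = ∫ s in t0..t1, DI s (z2 s) := by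
        refine intervalIntegral.integral_congr fun u hu => ?_
        rw [uIcc_of_le h01.le] at hu
        rw [hmem u hu]
      rw [hmem t0 ⟨le_rfl, h01.le⟩, hmem t1 ⟨h01.le, le_rfl⟩, hDisseq, hInt]
      exact hE2 t0 t1 hcase2 h01 ht1
    · -- cross case : t0 < tm < t1
      have hzt0 : z t0 = z1 t0 := hz1 t0 ⟨ht0, hcase2.le⟩
      have hzt1 : z t1 = z2 t1 := hz2 t1 ⟨hcase.le, ht1⟩
      rw [hzt0, hzt1]
      by_cases htop : I t0 (z1 t0) = ⊤
      · rw [htop, EReal.coe_ennreal_top,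
          EReal.top_add_of_ne_bot (EReal.coe_ne_bot _)]
        exact le_top
      · -- finite energy case
        have key : ∀ (x dv c : ℝ≥0∞) (r : ℝ), c ≠ ⊤ →
            ((x : EReal) + (dv : EReal) ≤ (c : EReal) + (r : EReal)) →
            x ≠ ⊤ ∧ dv ≠ ⊤ := by
          intro x dv c r hc h
          have hrhs : (c : EReal) + (r : EReal) < ⊤ :=
            EReal.add_lt_top (by simpa [EReal.coe_ennreal_eq_top_iff] using hc)
              (EReal.coe_ne_top _)
          constructor
          · have hx : (x : EReal) ≤ (c : EReal) + (r : EReal) :=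
              le_trans (le_add_of_nonneg_right (EReal.coe_ennreal_nonneg _)) h
            have := lt_top_iff_ne_top.mp (lt_of_le_of_lt hx hrhs)
            simpa [EReal.coe_ennreal_eq_top_iff] using this
          · have hx : (dv : EReal) ≤ (c : EReal) + (r : EReal) :=
              le_trans (le_add_of_nonneg_left (EReal.coe_ennreal_nonneg _)) h
            have := lt_top_iff_ne_top.mp (lt_of_le_of_lt hx hrhs)
            simpa [EReal.coe_ennreal_eq_top_iff] using this
        have E1 := hE1 t0 tm ht0 hcase2 le_rfl
        have E2 := hE2 tm t1 le_rfl hcase ht1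
        have hkey1 := key _ _ _ _ htop E1
        have hAmfin : I tm (z1 tm) ≠ ⊤ := hkey1.1
        have hD1fin : Diss D z1 t0 tm ≠ ⊤ := hkey1.2
        have hAmfin' : I tm (z2 tm) ≠ ⊤ := by rw [← hmatch]; exact hAmfin
        have hkey2 := key _ _ _ _ hAmfin' E2
        have hD2fin : Diss D z2 tm t1 ≠ ⊤ := hkey2.2
        -- finiteness along the curves
        have hfin1 : ∀ s ∈ Ioc t0 tm, I s (z1 s) ≠ ⊤ := by
          intro s hs
          exact (key _ _ _ _ htop (hE1 t0 s ht0 hs.1 hs.2)).1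
        have hfin2 : ∀ s ∈ Ioc tm t1, I s (z2 s) ≠ ⊤ := by
          intro s hs
          exact (key _ _ _ _ hAmfin' (hE2 tm s le_rfl hs.1 (hs.2.trans ht1))).1
        -- measurability of I q
        have hImeas : ∀ q ∈ Icc (0:ℝ) T, Measurable (I q) := by
          intro q hq
          refine lsc_measurable fun u w hu => hIlsc q hq u w ?_
          intro f
          exact (f.continuous.tendsto w).comp hu
        -- dissipation monotonicity helpers
        have hDmono1 : ∀ r s : ℝ, t0 ≤ r → r ≤ s → s ≤ tm →
            Diss D z1 t0 r ≤ Diss D z1 t0 s := by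
          intro r s hr hrs hstm
          rcases eq_or_lt_of_le hrs with rfl | h
          · exact le_rfl
          · exact le_trans (self_le_add_right _ _) (Diss_extend D z1 hr h)
        have hDfin1 : ∀ s : ℝ, t0 ≤ s → s ≤ tm → Diss D z1 t0 s ≠ ⊤ := by
          intro s hs hstm
          exact fun h => hD1fin (top_le_iff.mp
            (h ▸ hDmono1 s tm hs hstm le_rfl) ▸ rfl)
        have hDmono2 : ∀ r s : ℝ, tm ≤ r → r ≤ s → s ≤ t1 →
            Diss D z2 tm r ≤ Diss D z2 tm s := by
          intro r s hr hrs hst1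
          rcases eq_or_lt_of_le hrs with rfl | h
          · exact le_rfl
          · exact le_trans (self_le_add_right _ _) (Diss_extend D z2 hr h)
        have hDfin2 : ∀ s : ℝ, tm ≤ s → s ≤ t1 → Diss D z2 tm s ≠ ⊤ := by
          intro s hs hst1
          exact fun h => hD2fin (top_le_iff.mp
            (h ▸ hDmono2 s t1 hs hst1 le_rfl) ▸ rfl)
        -- variation functions
        set v1 : ℝ → ℝ := fun r => (Diss D z1 t0 (max t0 (min r tm))).toReal with hv1
        set v2 : ℝ → ℝ := fun r => (Diss D z2 tm (max tm (min r t1))).toReal with hv2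
        have hclamp1 : ∀ r : ℝ, t0 ≤ max t0 (min r tm) ∧ max t0 (min r tm) ≤ tm :=
          fun r => ⟨le_max_left _ _, max_le hcase2.le (min_le_right _ _)⟩
        have hclamp2 : ∀ r : ℝ, tm ≤ max tm (min r t1) ∧ max tm (min r t1) ≤ t1 :=
          fun r => ⟨le_max_left _ _, max_le hcase.le (min_le_right _ _)⟩
        have hv1mono : Monotone v1 := by
          intro x y hxy
          refine ENNReal.toReal_mono (hDfin1 _ (hclamp1 y).1 (hclamp1 y).2) ?_
          exact hDmono1 _ _ (hclamp1 x).1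
            (max_le_max le_rfl (min_le_min hxy le_rfl)) (hclamp1 y).2
        have hv2mono : Monotone v2 := by
          intro x y hxy
          refine ENNReal.toReal_mono (hDfin2 _ (hclamp2 y).1 (hclamp2 y).2) ?_
          exact hDmono2 _ _ (hclamp2 x).1
            (max_le_max le_rfl (min_le_min hxy le_rfl)) (hclamp2 y).2
        have hv1eq : ∀ s : ℝ, t0 ≤ s → s ≤ tm → v1 s = (Diss D z1 t0 s).toReal := by
          intro s hs hstm
          rw [hv1]; dsimp only
          rw [min_eq_left hstm, max_eq_right hs]
        have hv2eq : ∀ s : ℝ, tm ≤ s → s ≤ t1 → v2 s = (Diss D z2 tm s).toReal := by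
          intro s hs hst1
          rw [hv2]; dsimp only
          rw [min_eq_left hst1, max_eq_right hs]
        have hv1bound : ∀ r s : ℝ, t0 ≤ r → r ≤ s → s ≤ tm →
            ‖z1 s - z1 r‖ ≤ cD⁻¹ * (v1 s - v1 r) := by
          intro r s hr hrs hstm
          rcases eq_or_lt_of_le hrs with rfl | h
          · simp
          · have hext := Diss_extend D z1 hr h
            have hcomb : Diss D z1 t0 r + ENNReal.ofReal (cD * ‖z1 s - z1 r‖)
                ≤ Diss D z1 t0 s :=
              le_trans (add_le_add_right (hDcoer _ _) _) hext
            have htr := ENNReal.toReal_mono (hDfin1 s (hr.trans hrs) hstm) hcomb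
            rw [ENNReal.toReal_add (hDfin1 r hr (hrs.trans hstm)) ENNReal.ofReal_ne_top,
              ENNReal.toReal_ofReal (by positivity)] at htr
            have hkey : cD * ‖z1 s - z1 r‖ ≤ v1 s - v1 r := by
              rw [hv1eq s (hr.trans hrs) hstm, hv1eq r hr (hrs.trans hstm)]
              linarith
            calc ‖z1 s - z1 r‖ = cD⁻¹ * (cD * ‖z1 s - z1 r‖) :=
                  (inv_mul_cancel_left₀ hcD.ne' _).symm
              _ ≤ cD⁻¹ * (v1 s - v1 r) :=
                  mul_le_mul_of_nonneg_left hkey (inv_nonneg.2 hcD.le)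
        have hv2bound : ∀ r s : ℝ, tm ≤ r → r ≤ s → s ≤ t1 →
            ‖z2 s - z2 r‖ ≤ cD⁻¹ * (v2 s - v2 r) := by
          intro r s hr hrs hst1
          rcases eq_or_lt_of_le hrs with rfl | h
          · simp
          · have hext := Diss_extend D z2 hr h
            have hcomb : Diss D z2 tm r + ENNReal.ofReal (cD * ‖z2 s - z2 r‖)
                ≤ Diss D z2 tm s :=
              le_trans (add_le_add_right (hDcoer _ _) _) hext
            have htr := ENNReal.toReal_mono (hDfin2 s (hr.trans hrs) hst1) hcomb
            rw [ENNReal.toReal_add (hDfin2 r hr (hrs.trans hst1)) ENNReal.ofReal_ne_top,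
              ENNReal.toReal_ofReal (by positivity)] at htr
            have hkey : cD * ‖z2 s - z2 r‖ ≤ v2 s - v2 r := by
              rw [hv2eq s (hr.trans hrs) hst1, hv2eq r hr (hrs.trans hst1)]
              linarith
            calc ‖z2 s - z2 r‖ = cD⁻¹ * (cD * ‖z2 s - z2 r‖) :=
                  (inv_mul_cancel_left₀ hcD.ne' _).symm
              _ ≤ cD⁻¹ * (v2 s - v2 r) :=
                  mul_le_mul_of_nonneg_left hkey (inv_nonneg.2 hcD.le)
        have hz1m : AEStronglyMeasurable z1 (volume.restrict (Ioc t0 tm)) :=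
          curve_aesm hv1mono hv1bound
        have hz2m : AEStronglyMeasurable z2 (volume.restrict (Ioc tm t1)) :=
          curve_aesm hv2mono hv2bound
        have hI1 : IntervalIntegrable (fun s => DI s (z1 s)) volume t0 tm :=
          DI_intervalIntegrable hT hCI.le hImeas hIsmooth ht0 hcase2 htmT.le hz1m hfin1
        have hI2 : IntervalIntegrable (fun s => DI s (z2 s)) volume tm t1 :=
          DI_intervalIntegrable hT hCI.le hImeas hIsmooth htm0.le hcase ht1 hz2m hfin2
        have hIz1 : IntervalIntegrable (fun s => DI s (z s)) volume t0 tm := by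
          rw [intervalIntegrable_iff_integrableOn_Ioc_of_le hcase2.le] at hI1 ⊢
          refine hI1.congr ?_
          filter_upwards [ae_restrict_mem measurableSet_Ioc] with s hs
          rw [hz1 s ⟨ht0.trans hs.1.le, hs.2⟩]
        have hIz2 : IntervalIntegrable (fun s => DI s (z s)) volume tm t1 := by
          rw [intervalIntegrable_iff_integrableOn_Ioc_of_le hcase.le] at hI2 ⊢
          refine hI2.congr ?_
          filter_upwards [ae_restrict_mem measurableSet_Ioc] with s hs
          rw [hz2 s ⟨hs.1.le, hs.2.trans ht1⟩]
        have hJsplit : (∫ s in t0..tm, DI s (z s)) + (∫ s in tm..t1, DI s (z s))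
            = ∫ s in t0..t1, DI s (z s) :=
          intervalIntegral.integral_add_adjacent_intervals hIz1 hIz2
        have hJ1 : (∫ s in t0..tm, DI s (z s)) = ∫ s in t0..tm, DI s (z1 s) := by
          refine intervalIntegral.integral_congr fun u hu => ?_
          rw [uIcc_of_le hcase2.le] at hu
          rw [hz1 u ⟨ht0.trans hu.1, hu.2⟩]
        have hJ2 : (∫ s in tm..t1, DI s (z s)) = ∫ s in tm..t1, DI s (z2 s) := by
          refine intervalIntegral.integral_congr fun u hu => ?_
          rw [uIcc_of_le hcase.le] at hu
          rw [hz2 u ⟨hu.1, hu.2.trans ht1⟩]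
        have hJ : (∫ s in t0..t1, DI s (z s))
            = (∫ s in t0..tm, DI s (z1 s)) + ∫ s in tm..t1, DI s (z2 s) := by
          rw [← hJ1, ← hJ2, hJsplit]
        -- dissipation subadditivity
        have hDz : Diss D z t0 t1 ≤ Diss D z1 t0 tm + Diss D z2 tm t1 := by
          refine le_trans (Diss_subadd D hDtri z hcase2 hcase) (le_of_eq ?_)
          congr 1
          · exact Diss_congr D fun u hu => hz1 u ⟨ht0.trans hu.1, hu.2⟩
          · exact Diss_congr D fun u hu => hz2 u ⟨hu.1, hu.2.trans ht1⟩
        -- final chain in EReal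
        rw [hJ]
        calc (I t1 (z2 t1) : EReal) + (Diss D z t0 t1 : EReal)
            ≤ (I t1 (z2 t1) : EReal)
              + ((Diss D z1 t0 tm + Diss D z2 tm t1 : ℝ≥0∞) : EReal) :=
              add_le_add_right (EReal.coe_ennreal_le_coe_ennreal_iff.mpr hDz) _
          _ = ((I t1 (z2 t1) : EReal) + (Diss D z2 tm t1 : EReal))
              + (Diss D z1 t0 tm : EReal) := by
              rw [EReal.coe_ennreal_add]; abel
          _ ≤ ((I tm (z2 tm) : EReal)
                + ((∫ s in tm..t1, DI s (z2 s) : ℝ) : EReal))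
              + (Diss D z1 t0 tm : EReal) := add_le_add_left E2 _
          _ = ((I tm (z1 tm) : EReal) + (Diss D z1 t0 tm : EReal))
              + ((∫ s in tm..t1, DI s (z2 s) : ℝ) : EReal) := by
              rw [← hmatch]; abel
          _ ≤ ((I t0 (z1 t0) : EReal)
                + ((∫ s in t0..tm, DI s (z1 s) : ℝ) : EReal))
              + ((∫ s in tm..t1, DI s (z2 s) : ℝ) : EReal) := add_le_add_left E1 _
          _ = (I t0 (z1 t0) : EReal)
              + (((∫ s in t0..tm, DI s (z1 s)) + ∫ s in tm..t1, DI s (z2 s) : ℝ) : EReal) := by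
              rw [EReal.coe_add]; abel
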